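/- arXiv:2510.23586 — 4 statements merged into one kernel-verified Lean document; each statement's English description precedes it below -/
import Mathlib

section
/- Let q : V → W be a surjection of finite bus sets. Then the optimal value (infimum of total cost over feasible points) of the aggregated pipe-and-bubble model induced by q is less than or equal to the optimal value of the nodal pipe-and-bubble model; i.e., spatial aggregation by merging buses, relocating generators and loads to merged buses, and summing line ratings between zones while deleting intra-zone line limits, yields a relaxation (lower bound) of the nodal capacity expansion operational problem. -/
/-- Spatial aggregation of the nodal pipe-and-bubble model by a
surjection `q : V → W` (merging buses, keeping generation/shedding at the
nodal level, summing inter-zone line ratings and deleting intra-zone limits)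
yields a relaxation: the optimal value (infimum of total cost over feasible
points) of the aggregated model is at most that of the nodal model. -/
theorem aggregated_model_is_relaxation
    {V W : Type*} [Fintype V] [Fintype W] [DecidableEq W]
    (q : V → W) (hq : Function.Surjective q)
    (d gbar c : V → ℝ) (p : ℝ) (U : V × V → ℝ)
    (hd : ∀ v, 0 ≤ d v) (hgbar : ∀ v, 0 ≤ gbar v)
    (hc : ∀ v, 0 ≤ c v) (hp : 0 ≤ p)
    (hUsymm : ∀ u v, U (u, v) = U (v, u))
    (hUnonneg : ∀ u v, 0 ≤ U (u, v))
    (hUdiag : ∀ v, U (v, v) = 0) :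
    sInf { t : ℝ | ∃ (g s : V → ℝ) (F : W × W → ℝ),
        (∀ v, 0 ≤ g v ∧ g v ≤ gbar v) ∧
        (∀ v, 0 ≤ s v ∧ s v ≤ d v) ∧
        (∀ w w', F (w, w') = - F (w', w)) ∧
        (∀ w w', |F (w, w')| ≤ (if w = w' then 0 else
            ∑ u : V, ∑ v : V, if q u = w ∧ q v = w' then U (u, v) else 0)) ∧
        (∀ w : W, (∑ v : V, if q v = w then g v + s v - d v else 0)
            + (∑ w' : W, F (w', w)) = 0) ∧
        t = ∑ v : V, (c v * g v + p * s v) }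
    ≤ sInf { t : ℝ | ∃ (g s : V → ℝ) (f : V × V → ℝ),
        (∀ v, 0 ≤ g v ∧ g v ≤ gbar v) ∧
        (∀ v, 0 ≤ s v ∧ s v ≤ d v) ∧
        (∀ u v, f (u, v) = - f (v, u)) ∧
        (∀ u v, |f (u, v)| ≤ U (u, v)) ∧
        (∀ v : V, g v + s v + (∑ u : V, f (u, v)) = d v) ∧
        t = ∑ v : V, (c v * g v + p * s v) } := by
  apply csInf_le_csInf
  · -- aggregated set is bounded below by 0
    refine ⟨0, ?_⟩
    rintro t ⟨g, s, F, hg, hs, -, -, -, rfl⟩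
    exact Finset.sum_nonneg fun v _ => add_nonneg
      (mul_nonneg (hc v) (hg v).1) (mul_nonneg hp (hs v).1)
  · -- nodal set is nonempty
    refine ⟨∑ v : V, (c v * 0 + p * d v), 0, d, 0, ?_, ?_, ?_, ?_, ?_, rfl⟩
    · intro v; exact ⟨le_refl _, hgbar v⟩
    · intro v; exact ⟨hd v, le_refl _⟩
    · intro u v; simp
    · intro u v; simpa using hUnonneg u v
    · intro v; simp
  · -- every nodal feasible cost is an aggregated feasible cost
    rintro t ⟨g, s, f, hg, hs, hanti, hcap, hbal, rfl⟩
    refine ⟨g, s,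
      fun wp => ∑ u : V, ∑ v : V, if q u = wp.1 ∧ q v = wp.2 then f (u, v) else 0,
      hg, hs, ?_, ?_, ?_, rfl⟩
    · -- antisymmetry
      intro w w'
      dsimp only
      rw [Finset.sum_comm]
      rw [← Finset.sum_neg_distrib]
      refine Finset.sum_congr rfl fun v _ => ?_
      rw [← Finset.sum_neg_distrib]
      refine Finset.sum_congr rfl fun u _ => ?_
      by_cases h : q u = w ∧ q v = w'
      · simp [h, h.1, h.2, and_comm, hanti u v]
      · have h' : ¬ (q v = w' ∧ q u = w) := fun hh => h ⟨hh.2, hh.1⟩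
        simp [h, h']
    · -- capacity
      intro w w'
      dsimp only
      by_cases hww : w = w'
      · subst hww
        simp only [if_pos rfl]
        have h0 : (∑ u : V, ∑ v : V, if q u = w ∧ q v = w then f (u, v) else 0) = 0 := by
          have := Finset.sum_comm (s := Finset.univ) (t := Finset.univ)
            (f := fun u v => if q u = w ∧ q v = w then f (u, v) else 0)
          have hneg : (∑ u : V, ∑ v : V, if q u = w ∧ q v = w then f (u, v) else 0)
              = - ∑ u : V, ∑ v : V, if q u = w ∧ q v = w then f (u, v) else 0 := by
            conv_lhs => rw [Finset.sum_comm]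
            rw [← Finset.sum_neg_distrib]
            refine Finset.sum_congr rfl fun v _ => ?_
            rw [← Finset.sum_neg_distrib]
            refine Finset.sum_congr rfl fun u _ => ?_
            by_cases h : q u = w ∧ q v = w
            · simp [h, h.1, h.2, hanti u v]
            · have h' : ¬ (q v = w ∧ q u = w) := fun hh => h ⟨hh.2, hh.1⟩
              simp [h, h']
          linarith
        simp [h0]
      · simp only [if_neg hww]
        calc |∑ u : V, ∑ v : V, if q u = w ∧ q v = w' then f (u, v) else 0|
            ≤ ∑ u : V, |∑ v : V, if q u = w ∧ q v = w' then f (u, v) else 0| :=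
              Finset.abs_sum_le_sum_abs _ _
          _ ≤ ∑ u : V, ∑ v : V, if q u = w ∧ q v = w' then U (u, v) else 0 := by
              refine Finset.sum_le_sum fun u _ => ?_
              calc |∑ v : V, if q u = w ∧ q v = w' then f (u, v) else 0|
                  ≤ ∑ v : V, |if q u = w ∧ q v = w' then f (u, v) else 0| :=
                    Finset.abs_sum_le_sum_abs _ _
                _ ≤ ∑ v : V, if q u = w ∧ q v = w' then U (u, v) else 0 := by
                    refine Finset.sum_le_sum fun v _ => ?_
                    by_cases h : q u = w ∧ q v = w'
                    · simpa [h] using hcap u v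
                    · simp [h]
    · -- balance
      intro w
      dsimp only
      have hswap : (∑ w' : W, ∑ u : V, ∑ v : V,
            if q u = w' ∧ q v = w then f (u, v) else 0)
          = ∑ v : V, if q v = w then (∑ u : V, f (u, v)) else 0 := by
        have step1 : (∑ w' : W, ∑ u : V, ∑ v : V,
              if q u = w' ∧ q v = w then f (u, v) else 0)
            = ∑ u : V, ∑ v : V, if q v = w then f (u, v) else 0 := by
          rw [Finset.sum_comm]
          refine Finset.sum_congr rfl fun u _ => ?_
          rw [Finset.sum_comm]
          refine Finset.sum_congr rfl fun v _ => ?_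
          by_cases hv : q v = w
          · rw [if_pos hv]
            rw [Finset.sum_eq_single (q u)]
            · simp [hv]
            · intro b _ hb; simp [Ne.symm hb]
            · intro h; exact absurd (Finset.mem_univ _) h
          · simp [hv]
        rw [step1, Finset.sum_comm]
        refine Finset.sum_congr rfl fun v _ => ?_
        by_cases hv : q v = w
        · simp [hv]
        · simp [hv]
      rw [hswap, ← Finset.sum_add_distrib]
      refine Finset.sum_eq_zero fun v _ => ?_
      by_cases hv : q v = w
      · have := hbal v
        simp only [if_pos hv]
        linarith
      · simp [hv]
end

section
/- Let q : V → W be a surjection of finite bus sets and let (g, s, f) be any feasible point of the nodal pipe-and-bubble model. Define F : W × W → ℝ by F (w, w') = Σ over pairs (u,v) with q u = w and q v = w' of f (u, v). Then (g, s, F) is a feasible point of the aggregated pipe-and-bubble model induced by q, and its total cost equals the total cost of (g, s, f) in the nodal model. -/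
/-- Given a surjection `q : V → W` and a feasible point `(g, s, f)`
of the nodal pipe-and-bubble model, the zonal flows
`F (w, w') = ∑_{q u = w, q v = w'} f (u, v)` together with the same `(g, s)`
form a feasible point of the aggregated model induced by `q`, with the same
total cost. -/
theorem nodal_solution_maps_to_aggregated
    {V W : Type*} [Fintype V] [Fintype W] [DecidableEq W]
    (q : V → W) (hq : Function.Surjective q)
    (d gbar c : V → ℝ) (p : ℝ) (U : V × V → ℝ)
    (hd : ∀ v, 0 ≤ d v) (hgbar : ∀ v, 0 ≤ gbar v)
    (hc : ∀ v, 0 ≤ c v) (hp : 0 ≤ p)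
    (hUsymm : ∀ u v, U (u, v) = U (v, u))
    (hUnonneg : ∀ u v, 0 ≤ U (u, v))
    (hUdiag : ∀ v, U (v, v) = 0)
    -- a feasible point of the nodal model
    (g s : V → ℝ) (f : V × V → ℝ)
    (hg : ∀ v, 0 ≤ g v ∧ g v ≤ gbar v)
    (hs : ∀ v, 0 ≤ s v ∧ s v ≤ d v)
    (hanti : ∀ u v, f (u, v) = - f (v, u))
    (hcap : ∀ u v, |f (u, v)| ≤ U (u, v))
    (hbal : ∀ v : V, g v + s v + (∑ u : V, f (u, v)) = d v)
    -- the induced zonal flows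
    (F : W × W → ℝ)
    (hF : ∀ w w', F (w, w') =
        ∑ u : V, ∑ v : V, if q u = w ∧ q v = w' then f (u, v) else 0) :
    -- feasibility of (g, s, F) in the aggregated model
    ((∀ w w', F (w, w') = - F (w', w)) ∧
     (∀ w w', |F (w, w')| ≤ (if w = w' then 0 else
        ∑ u : V, ∑ v : V, if q u = w ∧ q v = w' then U (u, v) else 0)) ∧
     (∀ w : W, (∑ v : V, if q v = w then g v + s v - d v else 0)
        + (∑ w' : W, F (w', w)) = 0)) ∧
    -- equality of total costs
    (∑ v : V, (c v * g v + p * s v)) = (∑ v : V, (c v * g v + p * s v)) := by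
  have hanti' : ∀ w w', F (w, w') = - F (w', w) := by
    intro w w'
    rw [hF, hF, Finset.sum_comm, ← Finset.sum_neg_distrib]
    refine Finset.sum_congr rfl fun v _ => ?_
    rw [← Finset.sum_neg_distrib]
    refine Finset.sum_congr rfl fun u _ => ?_
    by_cases h : q u = w ∧ q v = w'
    · simp [h, h.1, h.2, hanti u v]
    · have h' : ¬ (q v = w' ∧ q u = w) := fun hc => h ⟨hc.2, hc.1⟩
      simp [h, h']
  refine ⟨⟨hanti', ?_, ?_⟩, rfl⟩
  · intro w w'
    by_cases hww : w = w'
    · subst hww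
      have h0 : F (w, w) = 0 := by
        have := hanti' w w; linarith
      simp [h0]
    · simp only [hww, if_false]
      rw [hF]
      refine (Finset.abs_sum_le_sum_abs _ _).trans (Finset.sum_le_sum fun u _ => ?_)
      refine (Finset.abs_sum_le_sum_abs _ _).trans (Finset.sum_le_sum fun v _ => ?_)
      by_cases h : q u = w ∧ q v = w'
      · simp [h, hcap u v]
      · simp [h]
  · intro w
    have key : (∑ w' : W, F (w', w))
        = ∑ v : V, if q v = w then (∑ u : V, f (u, v)) else 0 := by
      simp only [hF]
      calc (∑ w' : W, ∑ u : V, ∑ v : V, if q u = w' ∧ q v = w then f (u, v) else 0)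
          = ∑ u : V, ∑ v : V, ∑ w' : W, if q u = w' ∧ q v = w then f (u, v) else 0 := by
            rw [Finset.sum_comm]
            exact Finset.sum_congr rfl fun u _ => Finset.sum_comm
        _ = ∑ u : V, ∑ v : V, if q v = w then f (u, v) else 0 := by
            refine Finset.sum_congr rfl fun u _ => Finset.sum_congr rfl fun v _ => ?_
            by_cases hv : q v = w
            · simp [hv]
            · simp [hv]
        _ = ∑ v : V, ∑ u : V, if q v = w then f (u, v) else 0 := Finset.sum_comm
        _ = ∑ v : V, if q v = w then (∑ u : V, f (u, v)) else 0 := by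
            refine Finset.sum_congr rfl fun v _ => ?_
            by_cases hv : q v = w <;> simp [hv]
    rw [key, ← Finset.sum_add_distrib]
    refine Finset.sum_eq_zero fun v _ => ?_
    by_cases hv : q v = w
    · simp only [hv, if_true]
      have := hbal v; linarith
    · simp [hv]
end

section
/- Consider the two-stage stochastic pipe-and-bubble capacity expansion model with a finite scenario set Ω, probabilities p_ω ≥ 0 summing to 1, first-stage capacity investments x : V → ℝ with 0 ≤ x v ≤ x̄ v and linear investment costs k v ≥ 0, and, for each scenario ω, scenario loads d_ω v ≥ 0, availability factors α_ω v ∈ [0,1], generation bounds 0 ≤ g_ω v ≤ α_ω v · (ḡ v + x v), shedding 0 ≤ s_ω v ≤ d_ω v, antisymmetric flows bounded by the line ratings U, per-scenario power balance, and objective (Σ over v of k v · x v) + (Σ over ω of p_ω · Σ over v of (c v · g_ω v + p · s_ω v)). For any surjection q : V → W, the optimal value of the aggregated stochastic model—obtained by keeping investment, generation, and shedding variables indexed by V, enforcing power balance zonally over the fibers of q, and bounding zonal flows by the summed inter-zone ratings Ũ (w,w') = Σ over pairs (u,v) with q u = w, q v = w' of U (u,v)—is less than or equal to the optimal value of the nodal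 stochastic model. -/
/-- For the two-stage stochastic pipe-and-bubble capacity
expansion model with finite scenario set `Ω`, first-stage investments
`x : V → ℝ` and per-scenario operations, spatial aggregation by a surjection
`q : V → W` (keeping investment, generation and shedding at the nodal level,
enforcing power balance zonally over the fibers of `q`, and bounding zonal
flows by the summed inter-zone ratings) is a relaxation: its optimal value is
at most the optimal value of the nodal stochastic model. -/
theorem aggregated_stochastic_model_is_relaxation
    {V W Ω : Type*} [Fintype V] [Fintype W] [Fintype Ω] [DecidableEq W]
    (q : V → W) (hq : Function.Surjective q)
    (prob : Ω → ℝ) (hprob : ∀ ω, 0 ≤ prob ω) (hprobsum : ∑ ω : Ω, prob ω = 1)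
    (xbar k gbar c : V → ℝ) (p : ℝ)
    (d : Ω → V → ℝ) (α : Ω → V → ℝ) (U : V × V → ℝ)
    (hxbar : ∀ v, 0 ≤ xbar v) (hk : ∀ v, 0 ≤ k v)
    (hgbar : ∀ v, 0 ≤ gbar v) (hc : ∀ v, 0 ≤ c v) (hp : 0 ≤ p)
    (hd : ∀ ω v, 0 ≤ d ω v)
    (hα : ∀ ω v, 0 ≤ α ω v ∧ α ω v ≤ 1)
    (hUsymm : ∀ u v, U (u, v) = U (v, u))
    (hUnonneg : ∀ u v, 0 ≤ U (u, v))
    (hUdiag : ∀ v, U (v, v) = 0) :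
    sInf { t : ℝ | ∃ (x : V → ℝ) (g s : Ω → V → ℝ) (F : Ω → W × W → ℝ),
        (∀ v, 0 ≤ x v ∧ x v ≤ xbar v) ∧
        (∀ ω v, 0 ≤ g ω v ∧ g ω v ≤ α ω v * (gbar v + x v)) ∧
        (∀ ω v, 0 ≤ s ω v ∧ s ω v ≤ d ω v) ∧
        (∀ ω w w', F ω (w, w') = - F ω (w', w)) ∧
        (∀ ω w w', |F ω (w, w')| ≤ (if w = w' then 0 else
            ∑ u : V, ∑ v : V, if q u = w ∧ q v = w' then U (u, v) else 0)) ∧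
        (∀ ω (w : W), (∑ v : V, if q v = w then g ω v + s ω v - d ω v else 0)
            + (∑ w' : W, F ω (w', w)) = 0) ∧
        t = (∑ v : V, k v * x v)
            + ∑ ω : Ω, prob ω * ∑ v : V, (c v * g ω v + p * s ω v) }
    ≤ sInf { t : ℝ | ∃ (x : V → ℝ) (g s : Ω → V → ℝ) (f : Ω → V × V → ℝ),
        (∀ v, 0 ≤ x v ∧ x v ≤ xbar v) ∧
        (∀ ω v, 0 ≤ g ω v ∧ g ω v ≤ α ω v * (gbar v + x v)) ∧
        (∀ ω v, 0 ≤ s ω v ∧ s ω v ≤ d ω v) ∧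
        (∀ ω u v, f ω (u, v) = - f ω (v, u)) ∧
        (∀ ω u v, |f ω (u, v)| ≤ U (u, v)) ∧
        (∀ ω (v : V), g ω v + s ω v + (∑ u : V, f ω (u, v)) = d ω v) ∧
        t = (∑ v : V, k v * x v)
            + ∑ ω : Ω, prob ω * ∑ v : V, (c v * g ω v + p * s ω v) } := by

  apply csInf_le_csInf
  · -- bounded below by 0
    refine ⟨0, ?_⟩
    rintro t ⟨x, g, s, F, hx, hg, hs, -, -, -, rfl⟩
    have h1 : 0 ≤ ∑ v : V, k v * x v :=
      Finset.sum_nonneg fun v _ => mul_nonneg (hk v) (hx v).1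
    have h2 : 0 ≤ ∑ ω : Ω, prob ω * ∑ v : V, (c v * g ω v + p * s ω v) := by
      refine Finset.sum_nonneg fun ω _ => mul_nonneg (hprob ω) ?_
      exact Finset.sum_nonneg fun v _ =>
        add_nonneg (mul_nonneg (hc v) (hg ω v).1) (mul_nonneg hp (hs ω v).1)
    linarith
  · -- nodal set nonempty
    refine ⟨_, 0, 0, d, fun _ _ => 0, ?_, ?_, ?_, ?_, ?_, ?_, rfl⟩
    · exact fun v => ⟨le_refl 0, hxbar v⟩
    · intro ω v
      refine ⟨le_refl 0, mul_nonneg (hα ω v).1 ?_⟩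
      simpa using hgbar v
    · exact fun ω v => ⟨hd ω v, le_refl _⟩
    · intro ω u v; simp
    · intro ω u v; simpa using hUnonneg u v
    · intro ω v; simp
  · -- nodal feasible implies aggregated feasible
    rintro t ⟨x, g, s, f, hx, hg, hs, hanti, hcap, hbal, rfl⟩
    refine ⟨x, g, s,
      fun ω ww => if ww.1 = ww.2 then 0 else
        ∑ u : V, ∑ v : V, if q u = ww.1 ∧ q v = ww.2 then f ω (u, v) else 0,
      hx, hg, hs, ?_, ?_, ?_, rfl⟩
    · -- antisymmetry
      intro ω w w'
      by_cases h : w = w'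
      · simp [h]
      · have h' : ¬ (w' = w) := fun e => h e.symm
        simp only [h, h', if_false]
        rw [← Finset.sum_neg_distrib]
        rw [Finset.sum_comm]
        refine Finset.sum_congr rfl fun v _ => ?_
        rw [← Finset.sum_neg_distrib]
        refine Finset.sum_congr rfl fun u _ => ?_
        by_cases hc1 : q u = w ∧ q v = w'
        · rw [if_pos hc1, if_pos (⟨hc1.2, hc1.1⟩ : q v = w' ∧ q u = w),
            hanti ω v u, neg_neg]
        · rw [if_neg hc1, if_neg (fun h => hc1 ⟨h.2, h.1⟩ : ¬ (q v = w' ∧ q u = w)),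
            neg_zero]
    · -- capacity
      intro ω w w'
      by_cases h : w = w'
      · simp [h]
      · simp only [h, if_false]
        refine (Finset.abs_sum_le_sum_abs _ _).trans ?_
        refine Finset.sum_le_sum fun u _ => ?_
        refine (Finset.abs_sum_le_sum_abs _ _).trans ?_
        refine Finset.sum_le_sum fun v _ => ?_
        by_cases hc1 : q u = w ∧ q v = w'
        · simpa [hc1] using hcap ω u v
        · simp [hc1]
    · -- zonal balance
      intro ω w
      have hdiag : ∀ w0 : W,
          (∑ u : V, ∑ v : V, if q u = w0 ∧ q v = w0 then f ω (u, v) else 0) = 0 := by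
        intro w0
        have : (∑ u : V, ∑ v : V, if q u = w0 ∧ q v = w0 then f ω (u, v) else 0)
            = - (∑ u : V, ∑ v : V, if q u = w0 ∧ q v = w0 then f ω (u, v) else 0) := by
          rw [← Finset.sum_neg_distrib, Finset.sum_comm]
          refine Finset.sum_congr rfl fun v _ => ?_
          rw [← Finset.sum_neg_distrib]
          refine Finset.sum_congr rfl fun u _ => ?_
          by_cases hc1 : q u = w0 ∧ q v = w0
          · rw [if_pos hc1, if_pos (⟨hc1.2, hc1.1⟩ : q v = w0 ∧ q u = w0),
              hanti ω v u, neg_neg]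
          · rw [if_neg hc1,
              if_neg (fun h => hc1 ⟨h.2, h.1⟩ : ¬ (q v = w0 ∧ q u = w0)), neg_zero]
        linarith
      have hF : (∑ w' : W, (if w' = w then 0 else
            ∑ u : V, ∑ v : V, if q u = w' ∧ q v = w then f ω (u, v) else 0))
          = ∑ w' : W, ∑ u : V, ∑ v : V,
              if q u = w' ∧ q v = w then f ω (u, v) else 0 := by
        refine Finset.sum_congr rfl fun w' _ => ?_
        by_cases h : w' = w
        · simp [h, hdiag w]
        · simp [h]
      have hF2 : (∑ w' : W, ∑ u : V, ∑ v : V,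
            if q u = w' ∧ q v = w then f ω (u, v) else 0)
          = ∑ u : V, ∑ v : V, if q v = w then f ω (u, v) else 0 := by
        rw [Finset.sum_comm]
        refine Finset.sum_congr rfl fun u _ => ?_
        rw [Finset.sum_comm]
        refine Finset.sum_congr rfl fun v _ => ?_
        by_cases hv : q v = w
        · simp [hv, Finset.sum_ite_eq' Finset.univ (q u)]
        · simp [hv]
      have hF3 : (∑ u : V, ∑ v : V, if q v = w then f ω (u, v) else 0)
          = ∑ v : V, if q v = w then (∑ u : V, f ω (u, v)) else 0 := by
        rw [Finset.sum_comm]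
        refine Finset.sum_congr rfl fun v _ => ?_
        by_cases hv : q v = w <;> simp [hv]
      have hbal' : ∀ v, (∑ u : V, f ω (u, v)) = d ω v - g ω v - s ω v := by
        intro v; have := hbal ω v; linarith
      simp only [hF, hF2, hF3]
      rw [← Finset.sum_add_distrib]
      refine Finset.sum_eq_zero fun v _ => ?_
      by_cases hv : q v = w
      · simp [hv, hbal' v]; ring
      · simp [hv]
end

section
/- In the nodal pipe-and-bubble model, suppose bus v is a leaf: there is a bus w ≠ v with U (v, u) = 0 for every u ∉ {v, w} (so v is incident to a single radial line (v,w)). Then every feasible point (g, s, f) satisfies f (w, v) = d v − g v − s v; in particular the flow on a radial line is uniquely determined by the injections at the leaf bus. Moreover, if U (v, w) ≥ max (d v, ḡ v), then the capacity constraint |f (v, w)| ≤ U (v, w) is implied by the remaining constraints, and the model obtained by merging v into w (the aggregation induced by the quotient map identifying v with w and fixing all other buses) has the same optimal value as the nodal model. -/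
private lemma sum_antisym_aux {V : Type*} [Fintype V] (h : V → V → ℝ)
    (hh : ∀ a b, h a b = - h b a) : ∑ a : V, ∑ b : V, h a b = 0 := by
  have h1 : (∑ a : V, ∑ b : V, h a b) = ∑ b : V, ∑ a : V, h a b := Finset.sum_comm
  have h2 : (∑ b : V, ∑ a : V, h a b) = - ∑ a : V, ∑ b : V, h a b := by
    rw [← Finset.sum_neg_distrib]
    refine Finset.sum_congr rfl fun b _ => ?_
    rw [← Finset.sum_neg_distrib]
    exact Finset.sum_congr rfl fun a _ => hh a b
  linarith

/-- Suppose bus `v` is a leaf of the nodal pipe-and-bubble model: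
there is a bus `w ≠ v` with `U (v, u) = 0` for all `u ∉ {v, w}`. Then
(i) every feasible point satisfies `f (w, v) = d v - g v - s v` (the flow on a
radial line is determined by the injections at the leaf bus); and, moreover,
if `U (v, w) ≥ max (d v) (gbar v)`, then
(ii) the capacity constraint `|f (v, w)| ≤ U (v, w)` is implied by the
remaining constraints, and
(iii) the aggregated model induced by the quotient map identifying `v` with
`w` (and fixing all other buses) has the same optimal value as the nodal
model. -/
theorem leaf_bus_radial_flow_and_exact_merge
    {V : Type*} [Fintype V] [DecidableEq V]
    (d gbar c : V → ℝ) (p : ℝ) (U : V × V → ℝ)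
    (hd : ∀ x, 0 ≤ d x) (hgbar : ∀ x, 0 ≤ gbar x)
    (hc : ∀ x, 0 ≤ c x) (hp : 0 ≤ p)
    (hUsymm : ∀ a b, U (a, b) = U (b, a))
    (hUnonneg : ∀ a b, 0 ≤ U (a, b))
    (hUdiag : ∀ a, U (a, a) = 0)
    (v w : V) (hwv : w ≠ v)
    (hleaf : ∀ u : V, u ≠ v → u ≠ w → U (v, u) = 0)
    -- the quotient map identifying `v` with `w` and fixing all other buses
    (q : V → {u : V // u ≠ v})
    (hqdef : ∀ u : V, (q u : V) = if u = v then w else u) :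
    -- (i) the radial flow is determined by the injections at the leaf bus
    ((∀ (g s : V → ℝ) (f : V × V → ℝ),
        ((∀ x, 0 ≤ g x ∧ g x ≤ gbar x) ∧
         (∀ x, 0 ≤ s x ∧ s x ≤ d x) ∧
         (∀ a b, f (a, b) = - f (b, a)) ∧
         (∀ a b, |f (a, b)| ≤ U (a, b)) ∧
         (∀ x : V, g x + s x + (∑ u : V, f (u, x)) = d x)) →
        f (w, v) = d v - g v - s v) ∧
     (max (d v) (gbar v) ≤ U (v, w) →
       -- (ii) the radial-line capacity constraint is implied by the rest
       ((∀ (g s : V → ℝ) (f : V × V → ℝ),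
           ((∀ x, 0 ≤ g x ∧ g x ≤ gbar x) ∧
            (∀ x, 0 ≤ s x ∧ s x ≤ d x) ∧
            (∀ a b, f (a, b) = - f (b, a)) ∧
            (∀ a b, ¬((a = v ∧ b = w) ∨ (a = w ∧ b = v)) →
                |f (a, b)| ≤ U (a, b)) ∧
            (∀ x : V, g x + s x + (∑ u : V, f (u, x)) = d x)) →
           |f (v, w)| ≤ U (v, w)) ∧
        -- (iii) merging `v` into `w` preserves the optimal value
        sInf { t : ℝ | ∃ (g s : V → ℝ)
              (F : {u : V // u ≠ v} × {u : V // u ≠ v} → ℝ),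
            (∀ x, 0 ≤ g x ∧ g x ≤ gbar x) ∧
            (∀ x, 0 ≤ s x ∧ s x ≤ d x) ∧
            (∀ z z', F (z, z') = - F (z', z)) ∧
            (∀ z z', |F (z, z')| ≤ (if z = z' then 0 else
                ∑ a : V, ∑ b : V, if q a = z ∧ q b = z' then U (a, b) else 0)) ∧
            (∀ z : {u : V // u ≠ v},
                (∑ x : V, if q x = z then g x + s x - d x else 0)
                + (∑ z' : {u : V // u ≠ v}, F (z', z)) = 0) ∧
            t = ∑ x : V, (c x * g x + p * s x) }
        = sInf { t : ℝ | ∃ (g s : V → ℝ) (f : V × V → ℝ),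
            (∀ x, 0 ≤ g x ∧ g x ≤ gbar x) ∧
            (∀ x, 0 ≤ s x ∧ s x ≤ d x) ∧
            (∀ a b, f (a, b) = - f (b, a)) ∧
            (∀ a b, |f (a, b)| ≤ U (a, b)) ∧
            (∀ x : V, g x + s x + (∑ u : V, f (u, x)) = d x) ∧
            t = ∑ x : V, (c x * g x + p * s x) }))) := by
  have hvw : v ≠ w := Ne.symm hwv
  -- basic facts about the quotient map
  have hqne : ∀ (u : V) (hu : u ≠ v), q u = ⟨u, hu⟩ := by
    intro u hu; apply Subtype.ext; rw [hqdef, if_neg hu]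
  have hqv : q v = ⟨w, hwv⟩ := by
    apply Subtype.ext; rw [hqdef, if_pos rfl]
  -- fiber sum lemma
  have fiber : ∀ (a : V), a ≠ v → ∀ (h : V → ℝ),
      (∑ x : V, if q x = q a then h x else 0) = h a + (if a = w then h v else 0) := by
    intro a ha h
    have key : ∀ x : V, (if q x = q a then h x else 0)
        = (if x = a then h x else 0) + (if a = w then (if x = v then h x else 0) else 0) := by
      intro x
      by_cases hx : x = v
      · rw [hx, hqv, hqne a ha]
        by_cases haw : a = w
        · subst haw; simp [Subtype.ext_iff, Ne.symm ha]
        · simp [Subtype.ext_iff, haw, Ne.symm haw, Ne.symm ha]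
      · rw [hqne x hx, hqne a ha]
        by_cases hxa : x = a <;> simp [Subtype.ext_iff, hxa, hx, ha]
    calc (∑ x : V, if q x = q a then h x else 0)
        = ∑ x : V, ((if x = a then h x else 0)
            + (if a = w then (if x = v then h x else 0) else 0)) :=
          Finset.sum_congr rfl fun x _ => key x
      _ = h a + (if a = w then h v else 0) := by
          rw [Finset.sum_add_distrib, Finset.sum_ite_eq' Finset.univ a h]
          simp only [Finset.mem_univ, if_true]
          congr 1
          by_cases haw : a = w <;> simp [haw]
  -- subtype sum lemma
  have subsum : ∀ (h : {u : V // u ≠ v} → ℝ),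
      (∑ u : V, h (q u)) = h (q v) + ∑ z : {u : V // u ≠ v}, h z := by
    intro h
    have e1 : (∑ u : V, h (q u))
        = h (q v) + ∑ u ∈ Finset.univ.erase v, h (q u) := by
      rw [Finset.add_sum_erase Finset.univ (fun u => h (q u)) (Finset.mem_univ v)]
    rw [e1]
    congr 1
    rw [Finset.sum_subtype (p := fun u => u ≠ v) (Finset.univ.erase v)
      (by intro x; simp [Finset.mem_erase]) (fun u => h (q u))]
    exact Finset.sum_congr rfl fun z _ => by rw [hqne z.1 z.2]
  -- key computation reused in (i) and (ii)
  have radial : ∀ (g s : V → ℝ) (f : V × V → ℝ),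
      (∀ a b, f (a, b) = - f (b, a)) →
      (∀ a b, ¬((a = v ∧ b = w) ∨ (a = w ∧ b = v)) → |f (a, b)| ≤ U (a, b)) →
      (∀ x : V, g x + s x + (∑ u : V, f (u, x)) = d x) →
      f (w, v) = d v - g v - s v := by
    intro g s f hanti hcap hbal
    have hsum : ∑ u : V, f (u, v) = f (w, v) := by
      apply Finset.sum_eq_single_of_mem w (Finset.mem_univ w)
      intro u _ huw
      by_cases huv : u = v
      · subst huv; have := hanti u u; linarith
      · have h1 : U (u, v) = 0 := by rw [hUsymm]; exact hleaf u huv huw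
        have h2 := hcap u v (by rintro (⟨h, _⟩ | ⟨h, _⟩) <;> [exact huv h; exact huw h])
        rw [h1] at h2
        exact abs_nonpos_iff.mp h2
    have hb := hbal v
    rw [hsum] at hb
    linarith
  constructor
  · -- (i)
    rintro g s f ⟨hg, hs, hanti, hcap, hbal⟩
    exact radial g s f hanti (fun a b _ => hcap a b) hbal
  · intro hcapUV
    constructor
    · -- (ii)
      rintro g s f ⟨hg, hs, hanti, hcap, hbal⟩
      have hwv' := radial g s f hanti hcap hbal
      have hvw' : f (v, w) = g v + s v - d v := by have := hanti v w; linarith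
      rw [hvw', abs_le]
      have h1 := le_max_left (d v) (gbar v)
      have h2 := le_max_right (d v) (gbar v)
      have := hd v
      constructor <;> nlinarith [(hg v).1, (hg v).2, (hs v).1, (hs v).2]
    · -- (iii)
      congr 1
      ext t
      simp only [Set.mem_setOf_eq]
      constructor
      · -- zonal feasible point ⟹ nodal feasible point
        rintro ⟨g, s, F, hg, hs, hFanti, hFcap, hFbal, hcost⟩
        refine ⟨g, s, fun ab =>
          if ab.1 = v then (if ab.2 = w then g v + s v - d v else 0)
          else if ab.2 = v then (if ab.1 = w then d v - g v - s v else 0)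
          else F (q ab.1, q ab.2), hg, hs, ?_, ?_, ?_, hcost⟩
        · -- antisymmetry
          intro a b
          dsimp only
          by_cases ha : a = v <;> by_cases hb : b = v
          · have hbw : b ≠ w := by rw [hb]; exact hvw
            have haw : a ≠ w := by rw [ha]; exact hvw
            rw [if_pos ha, if_neg hbw, if_pos hb, if_neg haw]
            ring
          · rw [if_pos ha, if_neg hb, if_pos ha]
            split_ifs <;> ring
          · rw [if_neg ha, if_pos hb, if_pos hb]
            split_ifs <;> ring
          · rw [if_neg ha, if_neg hb, if_neg hb, if_neg ha]
            exact hFanti (q a) (q b)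
        · -- capacity
          intro a b
          dsimp only
          by_cases ha : a = v
          · rw [if_pos ha]
            by_cases hbw : b = w
            · rw [if_pos hbw, ha, hbw, abs_le]
              have h1 := le_max_left (d v) (gbar v)
              have h2 := le_max_right (d v) (gbar v)
              have := hd v
              constructor <;> nlinarith [(hg v).1, (hg v).2, (hs v).1, (hs v).2]
            · rw [if_neg hbw, abs_zero]; exact hUnonneg a b
          · rw [if_neg ha]
            by_cases hb : b = v
            · rw [if_pos hb]
              by_cases haw : a = w
              · rw [if_pos haw, haw, hb, hUsymm, abs_le]
                have h1 := le_max_left (d v) (gbar v)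
                have h2 := le_max_right (d v) (gbar v)
                have := hd v
                constructor <;> nlinarith [(hg v).1, (hg v).2, (hs v).1, (hs v).2]
              · rw [if_neg haw, abs_zero]; exact hUnonneg a b
            · rw [if_neg hb]
              by_cases hab : q a = q b
              · have hab' : a = b := by
                  have := congrArg Subtype.val hab
                  rw [hqdef, hqdef, if_neg ha, if_neg hb] at this
                  exact this
                have hle := hFcap (q a) (q b)
                rw [if_pos hab] at hle
                rw [hab', hUdiag]
                rw [hab'] at hle
                exact hle
              · have hbound := hFcap (q a) (q b)
                rw [if_neg hab] at hbound
                have hS : (∑ x : V, ∑ y : V,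
                    if q x = q a ∧ q y = q b then U (x, y) else 0) = U (a, b) := by
                  have e1 : ∀ x : V, (∑ y : V,
                      if q x = q a ∧ q y = q b then U (x, y) else 0)
                      = if q x = q a then
                          (U (x, b) + (if b = w then U (x, v) else 0)) else 0 := by
                    intro x
                    by_cases hx : q x = q a
                    · rw [if_pos hx]
                      have hf : (∑ y : V, if q y = q b then U (x, y) else 0)
                          = U (x, b) + (if b = w then U (x, v) else 0) :=
                        fiber b hb _
                      rw [← hf]
                      exact Finset.sum_congr rfl fun y _ => by simp [hx]
                    · rw [if_neg hx]
                      exact Finset.sum_eq_zero fun y _ => by simp [hx]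
                  rw [Finset.sum_congr rfl fun x _ => e1 x]
                  have hf2 : (∑ x : V, if q x = q a then
                      (U (x, b) + (if b = w then U (x, v) else 0)) else 0)
                      = (U (a, b) + (if b = w then U (a, v) else 0))
                        + (if a = w then (U (v, b) + (if b = w then U (v, v) else 0))
                            else 0) := fiber a ha _
                  rw [hf2]
                  have habw : ¬(a = w ∧ b = w) := by
                    rintro ⟨h1, h2⟩; exact hab (by rw [h1, h2])
                  by_cases haw : a = w
                  · have hbw : b ≠ w := fun h => habw ⟨haw, h⟩
                    rw [if_neg hbw, if_pos haw, if_neg hbw, hleaf b hb hbw]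
                    ring
                  · by_cases hbw : b = w
                    · rw [if_pos hbw, if_neg haw, hUsymm a v, hleaf a ha haw]
                      ring
                    · rw [if_neg hbw, if_neg haw]; ring
                rw [hS] at hbound
                exact hbound
        · -- balance
          intro x
          dsimp only
          by_cases hx : x = v
          · have hxw : x ≠ w := by rw [hx]; exact hvw
            have hterm : ∀ u : V,
                (if u = v then (if x = w then g v + s v - d v else 0)
                 else if x = v then (if u = w then d v - g v - s v else 0)
                 else F (q u, q x))
                = (if u = w then d v - g v - s v else 0) := by
              intro u
              by_cases hu : u = v
              · have huw : u ≠ w := by rw [hu]; exact hvw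
                rw [if_pos hu, if_neg hxw, if_neg huw]
              · rw [if_neg hu, if_pos hx]
            rw [Finset.sum_congr rfl fun u _ => hterm u,
              Finset.sum_ite_eq' Finset.univ w (fun _ => d v - g v - s v)]
            simp only [Finset.mem_univ, if_true]
            rw [hx]
            ring
          · -- x ≠ v
            have hterm : ∀ u : V,
                (if u = v then (if x = w then g v + s v - d v else 0)
                 else if x = v then (if u = w then d v - g v - s v else 0)
                 else F (q u, q x))
                = (if u = v then
                    (if x = w then g v + s v - d v else 0) - F (q v, q x) else 0)
                  + F (q u, q x) := by
              intro u
              by_cases hu : u = v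
              · rw [if_pos hu, if_pos hu, hu]; ring
              · rw [if_neg hu, if_neg hu, if_neg hx]; ring
            rw [Finset.sum_congr rfl fun u _ => hterm u, Finset.sum_add_distrib,
              Finset.sum_ite_eq' Finset.univ v
                (fun _ => (if x = w then g v + s v - d v else 0) - F (q v, q x))]
            simp only [Finset.mem_univ, if_true]
            have hsub : (∑ u : V, F (q u, q x))
                = F (q v, q x) + ∑ z' : {u : V // u ≠ v}, F (z', q x) :=
              subsum (fun z => F (z, q x))
            rw [hsub]
            have hb := hFbal (q x)
            have hfib : (∑ y : V, if q y = q x then g y + s y - d y else 0)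
                = (g x + s x - d x) + (if x = w then g v + s v - d v else 0) :=
              fiber x hx _
            rw [hfib] at hb
            linarith
      · -- nodal feasible point ⟹ zonal feasible point
        rintro ⟨g, s, f, hg, hs, hanti, hcap, hbal, hcost⟩
        refine ⟨g, s, fun zz => if zz.1 = zz.2 then 0 else
          ∑ a : V, ∑ b : V, if q a = zz.1 ∧ q b = zz.2 then f (a, b) else 0,
          hg, hs, ?_, ?_, ?_, hcost⟩
        · -- antisymmetry
          intro z z'
          dsimp only
          by_cases hz : z = z'
          · simp [hz]
          · rw [if_neg hz, if_neg (Ne.symm hz), ← Finset.sum_neg_distrib,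
              Finset.sum_comm]
            refine Finset.sum_congr rfl fun a _ => ?_
            rw [← Finset.sum_neg_distrib]
            refine Finset.sum_congr rfl fun b _ => ?_
            by_cases h : q a = z' ∧ q b = z
            · simp only [if_pos h, if_pos (show q b = z ∧ q a = z' from ⟨h.2, h.1⟩)]
              linarith [hanti a b]
            · simp only [if_neg h,
                if_neg (show ¬(q b = z ∧ q a = z') from fun hh => h ⟨hh.2, hh.1⟩)]
              ring
        · -- capacity
          intro z z'
          dsimp only
          by_cases hz : z = z'
          · simp [hz]
          · rw [if_neg hz, if_neg hz]
            refine le_trans (Finset.abs_sum_le_sum_abs _ _) ?_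
            refine Finset.sum_le_sum fun a _ => ?_
            refine le_trans (Finset.abs_sum_le_sum_abs _ _) ?_
            refine Finset.sum_le_sum fun b _ => ?_
            by_cases h : q a = z ∧ q b = z' <;> simp [h, hcap a b]
        · -- balance
          intro z
          dsimp only
          have step1 : (∑ z' : {u : V // u ≠ v}, if z' = z then (0:ℝ) else
              ∑ a : V, ∑ b : V, if q a = z' ∧ q b = z then f (a, b) else 0)
              = ∑ z' : {u : V // u ≠ v},
                  ∑ a : V, ∑ b : V, if q a = z' ∧ q b = z then f (a, b) else 0 := by
            refine Finset.sum_congr rfl fun z' _ => ?_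
            by_cases hz : z' = z
            · rw [if_pos hz, hz]
              symm
              refine sum_antisym_aux (fun a b => if q a = z ∧ q b = z then f (a, b) else 0)
                (fun a b => ?_)
              by_cases h1 : q a = z <;> by_cases h2 : q b = z <;>
                simp [h1, h2, hanti a b]
            · rw [if_neg hz]
          have step2 : (∑ z' : {u : V // u ≠ v},
              ∑ a : V, ∑ b : V, if q a = z' ∧ q b = z then f (a, b) else 0)
              = ∑ a : V, ∑ b : V, if q b = z then f (a, b) else 0 := by
            rw [Finset.sum_comm]
            refine Finset.sum_congr rfl fun a _ => ?_
            rw [Finset.sum_comm]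
            refine Finset.sum_congr rfl fun b _ => ?_
            by_cases hb : q b = z
            · simp only [hb, and_true]
              rw [Finset.sum_ite_eq Finset.univ (q a) (fun _ => f (a, b))]
              simp
            · simp [hb]
          have step3 : (∑ a : V, ∑ b : V, if q b = z then f (a, b) else 0)
              = ∑ b : V, if q b = z then (d b - g b - s b) else 0 := by
            rw [Finset.sum_comm]
            refine Finset.sum_congr rfl fun b _ => ?_
            by_cases hb : q b = z
            · rw [if_pos hb]
              have e : (∑ a : V, if q b = z then f (a, b) else 0)
                  = ∑ a : V, f (a, b) :=
                Finset.sum_congr rfl fun a _ => if_pos hb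
              rw [e]
              have := hbal b
              linarith
            · rw [if_neg hb]
              exact Finset.sum_eq_zero fun a _ => if_neg hb
          rw [step1, step2, step3, ← Finset.sum_add_distrib]
          refine Finset.sum_eq_zero fun x _ => ?_
          by_cases hx : q x = z <;> simp [hx] <;> ring
end
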